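/- Let A, c ∈ ℂ with A ≠ 0 and Re(c) = 0. Then: (i) for every α, β, γ, δ ∈ ℝ with αδ + βγ = 1 and δ + iγc ≠ 0, the transformed value A' = A·(δ + iγc)⁴ satisfies A'/|A'| = A/|A| (the factor (δ + iγc)⁴ is a positive real number); (ii) there exist α, β, γ, δ ∈ ℝ with αδ + βγ = 1 and δ + iγc ≠ 0 such that (αc + iβ)/(δ + iγc) = 0 and A·(δ + iγc)⁴ = A/|A|. -/

import Mathlib

open Complex

lemma key_real (c : ℂ) (hc : c.re = 0) (γ δ : ℝ) :
    (δ : ℂ) + I * γ * c = ((δ - γ * c.im : ℝ) : ℂ) := by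
  apply Complex.ext <;> simp [hc] <;> ring

/-- **The orbits with `Re c = 0`:** for `A ≠ 0` and `Re c = 0`,
(i) every Ehlers group element `(α, β, γ, δ)` with `αδ + βγ = 1` and `δ + iγc ≠ 0`
multiplies `A` by the positive real factor `(δ + iγc)⁴`, so `A' = A(δ + iγc)⁴`
satisfies `A'/|A'| = A/|A|`; (ii) there is such an element carrying `(c, A)` to
`(c', A') = (0, A/|A|)`. -/
theorem ehlers_orbit_re_eq_zero (A c : ℂ) (hA : A ≠ 0) (hc : c.re = 0) :
    (∀ α β γ δ : ℝ, α * δ + β * γ = 1 → (δ : ℂ) + I * γ * c ≠ 0 →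
        (0 < (((δ : ℂ) + I * γ * c) ^ 4).re ∧ (((δ : ℂ) + I * γ * c) ^ 4).im = 0)
        ∧ A * ((δ : ℂ) + I * γ * c) ^ 4
            / ((‖A * ((δ : ℂ) + I * γ * c) ^ 4‖ : ℝ) : ℂ)
          = A / ((‖A‖ : ℝ) : ℂ))
    ∧ ∃ α β γ δ : ℝ, α * δ + β * γ = 1 ∧ (δ : ℂ) + I * γ * c ≠ 0
        ∧ (α * c + I * β) / ((δ : ℂ) + I * γ * c) = 0
        ∧ A * ((δ : ℂ) + I * γ * c) ^ 4 = A / ((‖A‖ : ℝ) : ℂ) := by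
  constructor
  · intro α β γ δ h1 hne
    rw [key_real c hc γ δ] at hne ⊢
    set r : ℝ := δ - γ * c.im with hr
    have hr0 : r ≠ 0 := by
      intro h; apply hne; rw [h]; simp
    have hr4 : (0:ℝ) < r ^ 4 := by positivity
    refine ⟨⟨by rw [← Complex.ofReal_pow, Complex.ofReal_re]; exact hr4,
      by rw [← Complex.ofReal_pow, Complex.ofReal_im]⟩, ?_⟩
    have habs : ‖A * ((r:ℂ)) ^ 4‖ = ‖A‖ * r ^ 4 := by
      rw [norm_mul, norm_pow, Complex.norm_real, Real.norm_eq_abs, ← _root_.abs_pow, _root_.abs_of_nonneg hr4.le]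
    rw [habs]
    have hAabs : (‖A‖ : ℝ) ≠ 0 := by
      exact norm_ne_zero_iff.mpr hA
    rw [Complex.ofReal_mul, Complex.ofReal_pow]
    exact mul_div_mul_right A _ (pow_ne_zero _ (Complex.ofReal_ne_zero.mpr hr0))
  · set a : ℝ := ‖A‖ with ha
    have hapos : 0 < a := by
      simpa [ha] using norm_pos_iff.mpr hA
    refine ⟨a ^ ((1:ℝ)/4), -(a ^ ((1:ℝ)/4)) * c.im, 0, a ^ (-(1:ℝ)/4), ?_, ?_, ?_, ?_⟩
    · rw [mul_zero, add_zero, ← Real.rpow_add hapos]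
      norm_num
    · rw [key_real c hc 0 (a ^ (-(1:ℝ)/4))]
      simp only [zero_mul, sub_zero]
      exact_mod_cast (Real.rpow_pos_of_pos hapos _).ne'
    · have hcim : c = (c.im : ℂ) * I := by
        apply Complex.ext <;> simp [hc]
      rw [div_eq_zero_iff]
      left
      rw [hcim]
      push_cast
      simp only [Complex.mul_I_im, Complex.ofReal_re]
      ring
    · rw [key_real c hc 0 (a ^ (-(1:ℝ)/4))]
      simp only [zero_mul, sub_zero]
      have : (a ^ (-(1:ℝ)/4)) ^ 4 = a⁻¹ := by
        rw [← Real.rpow_natCast (a ^ (-(1:ℝ)/4)) 4, ← Real.rpow_mul hapos.le]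
        norm_num [Real.rpow_neg_one]
      push_cast [← Complex.ofReal_pow, this]
      rw [div_eq_mul_inv]
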